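/- For all positive integers n, √(2π) · n^{n+1/2} · e^{−n + 1/(12n+1)} < n! < √(2π) · n^{n+1/2} · e^{−n + 1/(12n)}. -/

import Mathlib

open Real Filter Topology Stirling


lemma log_ratio_upper {t : ℝ} (h0 : 0 < t) (h1 : t < 1) :
    Real.log (1+t) - Real.log (1-t) < 2*t + (2/3) * (t^3/(1-t^2)) := by
  set F : ℝ → ℝ := fun x => Real.log (1+x) - Real.log (1-x) - 2*x - (2/3) * (x^3/(1-x^2)) with hF
  have hderiv : ∀ x ∈ Set.Ico (0:ℝ) 1, HasDerivAt F
      (1/(1+x) + 1/(1-x) - 2 - (2/3) * ((3*x^2*(1-x^2)+2*x^4)/(1-x^2)^2)) x := by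
    intro x hx
    obtain ⟨hx0, hx1⟩ := hx
    have hp : (0:ℝ) < 1 + x := by linarith
    have hm : (0:ℝ) < 1 - x := by linarith
    have hd : (1 - x^2) ≠ 0 := by nlinarith
    have h1' : HasDerivAt (fun y : ℝ => Real.log (1+y)) (1/(1+x)) x := by
      have := (Real.hasDerivAt_log hp.ne').comp x ((hasDerivAt_id x).const_add 1)
      simpa [Function.comp_def] using this
    have h2' : HasDerivAt (fun y : ℝ => Real.log (1-y)) (-(1/(1-x))) x := by
      have := (Real.hasDerivAt_log hm.ne').comp x ((hasDerivAt_id x).const_sub 1)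
      simpa [Function.comp_def] using this
    have h3' : HasDerivAt (fun y : ℝ => y^3/(1-y^2))
        ((3*x^2*(1-x^2)+2*x^4)/(1-x^2)^2) x := by
      have hnum : HasDerivAt (fun y : ℝ => y^3) (3*x^2) x := by
        simpa using hasDerivAt_pow 3 x
      have hden : HasDerivAt (fun y : ℝ => 1-y^2) (-(2*x)) x := by
        simpa using ((hasDerivAt_pow 2 x).const_sub 1)
      have := hnum.div hden hd
      exact this.congr_deriv (by ring)
    have := ((h1'.sub h2').sub ((hasDerivAt_id x).const_mul 2)).sub (h3'.const_mul (2/3))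
    exact this.congr_deriv (by ring)
  have hanti : StrictAntiOn F (Set.Ico (0:ℝ) 1) := by
    apply strictAntiOn_of_hasDerivWithinAt_neg (convex_Ico 0 1)
    · intro x hx
      exact (hderiv x hx).continuousAt.continuousWithinAt
    · intro x hx
      rw [interior_Ico] at hx
      exact ((hderiv x ⟨hx.1.le, hx.2⟩).hasDerivWithinAt)
    · intro x hx
      rw [interior_Ico] at hx
      obtain ⟨hx0, hx1⟩ := hx
      have hd : (0:ℝ) < 1 - x^2 := by nlinarith
      have key : 1/(1+x) + 1/(1-x) - 2 - (2/3) * ((3*x^2*(1-x^2)+2*x^4)/(1-x^2)^2)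
          = -(4/3) * x^4 / (1-x^2)^2 := by
        have hp : (0:ℝ) < 1 + x := by linarith
        have hm : (0:ℝ) < 1 - x := by linarith
        field_simp
        ring
      rw [key]
      have : (0:ℝ) < x^4 := by positivity
      have : (0:ℝ) < (1-x^2)^2 := by positivity
      rw [div_neg_iff]
      right
      constructor
      · nlinarith
      · positivity
  have := hanti ⟨le_refl 0, one_pos⟩ ⟨h0.le, h1⟩ h0
  simp only [hF] at this
  norm_num at this
  linarith


lemma log_ratio_lower {t : ℝ} (h0 : 0 < t) (h1 : t < 1) :
    2*t + 2 * (t^3/(3-t^2)) < Real.log (1+t) - Real.log (1-t) := by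
  set G : ℝ → ℝ := fun x => Real.log (1+x) - Real.log (1-x) - 2*x - 2 * (x^3/(3-x^2)) with hG
  have hderiv : ∀ x ∈ Set.Ico (0:ℝ) 1, HasDerivAt G
      (1/(1+x) + 1/(1-x) - 2 - 2 * ((3*x^2*(3-x^2)+2*x^4)/(3-x^2)^2)) x := by
    intro x hx
    obtain ⟨hx0, hx1⟩ := hx
    have hp : (0:ℝ) < 1 + x := by linarith
    have hm : (0:ℝ) < 1 - x := by linarith
    have hd : (3 - x^2) ≠ 0 := by nlinarith
    have h1' : HasDerivAt (fun y : ℝ => Real.log (1+y)) (1/(1+x)) x := by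
      have := (Real.hasDerivAt_log hp.ne').comp x ((hasDerivAt_id x).const_add 1)
      simpa [Function.comp_def] using this
    have h2' : HasDerivAt (fun y : ℝ => Real.log (1-y)) (-(1/(1-x))) x := by
      have := (Real.hasDerivAt_log hm.ne').comp x ((hasDerivAt_id x).const_sub 1)
      simpa [Function.comp_def] using this
    have h3' : HasDerivAt (fun y : ℝ => y^3/(3-y^2))
        ((3*x^2*(3-x^2)+2*x^4)/(3-x^2)^2) x := by
      have hnum : HasDerivAt (fun y : ℝ => y^3) (3*x^2) x := by
        simpa using hasDerivAt_pow 3 x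
      have hden : HasDerivAt (fun y : ℝ => 3-y^2) (-(2*x)) x := by
        simpa using ((hasDerivAt_pow 2 x).const_sub 3)
      have := hnum.div hden hd
      exact this.congr_deriv (by ring)
    have := ((h1'.sub h2').sub ((hasDerivAt_id x).const_mul 2)).sub (h3'.const_mul 2)
    exact this.congr_deriv (by ring)
  have hmono : StrictMonoOn G (Set.Ico (0:ℝ) 1) := by
    apply strictMonoOn_of_hasDerivWithinAt_pos (convex_Ico 0 1)
    · intro x hx
      exact (hderiv x hx).continuousAt.continuousWithinAt
    · intro x hx
      rw [interior_Ico] at hx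
      exact ((hderiv x ⟨hx.1.le, hx.2⟩).hasDerivWithinAt)
    · intro x hx
      rw [interior_Ico] at hx
      obtain ⟨hx0, hx1⟩ := hx
      have hd1 : (0:ℝ) < 1 - x^2 := by nlinarith
      have hd3 : (0:ℝ) < 3 - x^2 := by nlinarith
      have key : 1/(1+x) + 1/(1-x) - 2 - 2 * ((3*x^2*(3-x^2)+2*x^4)/(3-x^2)^2)
          = 8 * x^4 / ((1-x^2)*(3-x^2)^2) := by
        have hp : (0:ℝ) < 1 + x := by linarith
        have hm : (0:ℝ) < 1 - x := by linarith
        field_simp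
        ring
      rw [key]
      positivity
  have := hmono ⟨le_refl 0, one_pos⟩ ⟨h0.le, h1⟩ h0
  simp only [hG] at this
  norm_num at this
  linarith


lemma step_upper {x : ℝ} (hx : 1 ≤ x) :
    (x + 1/2) * (Real.log (x+1) - Real.log x) - 1 < 1/(12*x) - 1/(12*(x+1)) := by
  have hx0 : (0:ℝ) < x := by linarith
  set t : ℝ := 1/(2*x+1) with ht
  have ht0 : 0 < t := by positivity
  have ht1 : t < 1 := by
    rw [ht, div_lt_one (by linarith)]; linarith
  have h2x : (0:ℝ) < 2*x+1 := by linarith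
  have hlog : Real.log (x+1) - Real.log x = Real.log (1+t) - Real.log (1-t) := by
    have e1 : 1 + t = (x+1)/(x+1/2) := by rw [ht]; field_simp; ring
    have e2 : 1 - t = x/(x+1/2) := by rw [ht]; field_simp; ring
    rw [e1, e2, Real.log_div (by linarith) (by linarith),
      Real.log_div (by linarith) (by linarith)]
    ring
  rw [hlog]
  have key := log_ratio_upper ht0 ht1
  have hmul : (0:ℝ) < x + 1/2 := by linarith
  have h3 : (x + 1/2) * (Real.log (1+t) - Real.log (1-t))
      < (x + 1/2) * (2*t + (2/3) * (t^3/(1-t^2))) :=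
    (mul_lt_mul_iff_right₀ hmul).mpr key
  have hid : (x + 1/2) * (2*t + (2/3) * (t^3/(1-t^2))) - 1 = 1/(12*x) - 1/(12*(x+1)) := by
    have hden : (0:ℝ) < 1 - t^2 := by nlinarith
    have e3 : t^3/(1-t^2) = 1/((2*x+1)*(4*x^2+4*x)) := by
      rw [div_eq_div_iff hden.ne' (by positivity)]
      rw [ht]; field_simp; ring
    rw [e3, ht]
    have hx' : x ≠ 0 := hx0.ne'
    have h2 : (2:ℝ)*x+1 ≠ 0 := by positivity
    have h3 : (x:ℝ)+1 ≠ 0 := by positivity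
    field_simp
    ring
  linarith

lemma step_lower {x : ℝ} (hx : 1 ≤ x) :
    1/(12*x+1) - 1/(12*(x+1)+1) < (x + 1/2) * (Real.log (x+1) - Real.log x) - 1 := by
  have hx0 : (0:ℝ) < x := by linarith
  set t : ℝ := 1/(2*x+1) with ht
  have ht0 : 0 < t := by positivity
  have ht1 : t < 1 := by
    rw [ht, div_lt_one (by linarith)]; linarith
  have hlog : Real.log (x+1) - Real.log x = Real.log (1+t) - Real.log (1-t) := by
    have e1 : 1 + t = (x+1)/(x+1/2) := by rw [ht]; field_simp; ring
    have e2 : 1 - t = x/(x+1/2) := by rw [ht]; field_simp; ring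
    rw [e1, e2, Real.log_div (by linarith) (by linarith),
      Real.log_div (by linarith) (by linarith)]
    ring
  rw [hlog]
  have key := log_ratio_lower ht0 ht1
  have hmul : (0:ℝ) < x + 1/2 := by linarith
  have h3 : (x + 1/2) * (2*t + 2 * (t^3/(3-t^2)))
      < (x + 1/2) * (Real.log (1+t) - Real.log (1-t)) :=
    (mul_lt_mul_iff_right₀ hmul).mpr key
  have hid : (x + 1/2) * (2*t + 2 * (t^3/(3-t^2))) - 1 = 1/(12*x^2+12*x+2) := by
    have hden : (0:ℝ) < 3 - t^2 := by nlinarith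
    have e3 : t^3/(3-t^2) = 1/((2*x+1)*(3*(2*x+1)^2-1)) := by
      rw [div_eq_div_iff hden.ne' (by nlinarith : ((2*x+1)*(3*(2*x+1)^2-1) : ℝ) ≠ 0)]
      rw [ht]; field_simp
    rw [e3, ht]
    have hx' : x ≠ 0 := hx0.ne'
    have h2 : (2:ℝ)*x+1 ≠ 0 := by positivity
    have h5 : (3*(2*x+1)^2-1 : ℝ) ≠ 0 := by nlinarith
    have h4 : (12:ℝ)*x^2+12*x+2 ≠ 0 := by positivity
    field_simp
    have h6 : (x*2+1)^2*3-1 = x*12*(x+1)+2 := by ring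
    rw [h6, add_sub_cancel_left, one_div, inv_mul_cancel₀ (by positivity)]
  have hrat : 1/(12*x+1) - 1/(12*(x+1)+1) < 1/(12*x^2+12*x+2) := by
    have d1 : (0:ℝ) < 12*x+1 := by linarith
    have d2 : (0:ℝ) < 12*(x+1)+1 := by linarith
    have d3 : (0:ℝ) < 12*x^2+12*x+2 := by nlinarith
    have e : 1/(12*x+1) - 1/(12*(x+1)+1) = 12/((12*x+1)*(12*(x+1)+1)) := by
      field_simp; ring
    rw [e, div_lt_div_iff₀ (by positivity) d3]
    nlinarith
  linarith


noncomputable def dd (n : ℕ) : ℝ := Real.log (n.factorial) - ((n:ℝ) + 1/2) * Real.log n + n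

lemma dd_sub (n : ℕ) (hn : 0 < n) :
    dd n - dd (n+1) = (((n:ℝ)) + 1/2) * (Real.log ((n:ℝ)+1) - Real.log n) - 1 := by
  have hpos : (0:ℝ) < n := by exact_mod_cast hn
  have hfac : (0:ℝ) < n.factorial := by exact_mod_cast n.factorial_pos
  have hlog : Real.log ((n+1).factorial) = Real.log ((n:ℝ)+1) + Real.log (n.factorial) := by
    rw [Nat.factorial_succ]
    push_cast
    rw [Real.log_mul (by positivity) (by positivity)]
  simp only [dd, hlog]
  push_cast
  ring

lemma dd_eq_stirling (n : ℕ) (hn : 0 < n) :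
    dd n = Real.log (stirlingSeq n) + (1/2) * Real.log 2 := by
  have hpos : (0:ℝ) < n := by exact_mod_cast hn
  have hfac : (0:ℝ) < n.factorial := by exact_mod_cast n.factorial_pos
  have hexp : (0:ℝ) < Real.exp 1 := Real.exp_pos 1
  rw [stirlingSeq]
  rw [Real.log_div hfac.ne' (by positivity)]
  rw [Real.log_mul (by positivity) (by positivity)]
  rw [Real.log_sqrt (by positivity), Real.log_mul (by norm_num) hpos.ne']
  rw [Real.log_pow, Real.log_div hpos.ne' hexp.ne', Real.log_exp]
  simp only [dd]
  push_cast
  ring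

lemma dd_tendsto :
    Tendsto (fun k : ℕ => dd (k+1)) atTop (𝓝 (Real.log (Real.sqrt (2*Real.pi)))) := by
  have hπ : (0:ℝ) < Real.pi := Real.pi_pos
  have hsp : (0:ℝ) < Real.sqrt Real.pi := Real.sqrt_pos.mpr hπ
  have h1 : Tendsto (fun k : ℕ => stirlingSeq (k+1)) atTop (𝓝 (Real.sqrt Real.pi)) :=
    tendsto_stirlingSeq_sqrt_pi.comp (tendsto_add_atTop_nat 1)
  have h2 : Tendsto (fun k : ℕ => Real.log (stirlingSeq (k+1))) atTop
      (𝓝 (Real.log (Real.sqrt Real.pi))) :=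
    ((Real.continuousAt_log hsp.ne').tendsto).comp h1
  have h3 : Tendsto (fun k : ℕ => Real.log (stirlingSeq (k+1)) + (1/2) * Real.log 2) atTop
      (𝓝 (Real.log (Real.sqrt Real.pi) + (1/2) * Real.log 2)) :=
    h2.add_const _
  have heq : Real.log (Real.sqrt Real.pi) + (1/2) * Real.log 2
      = Real.log (Real.sqrt (2*Real.pi)) := by
    rw [Real.log_sqrt hπ.le, Real.log_sqrt (by positivity), Real.log_mul (by norm_num) hπ.ne']
    ring
  rw [← heq]
  exact h3.congr (fun k => (dd_eq_stirling (k+1) (Nat.succ_pos k)).symm)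

lemma dd_bounds (n : ℕ) (hn : 0 < n) :
    Real.log (Real.sqrt (2*Real.pi)) + 1/(12*(n:ℝ)+1) < dd n ∧
    dd n < Real.log (Real.sqrt (2*Real.pi)) + 1/(12*(n:ℝ)) := by
  set c : ℝ := Real.log (Real.sqrt (2*Real.pi)) with hc
  set A : ℕ → ℝ := fun k => dd (k+1) - 1/(12*((k:ℝ)+1)) with hA
  set B : ℕ → ℝ := fun k => dd (k+1) - 1/(12*((k:ℝ)+1)+1) with hB
  have hx1 : ∀ k : ℕ, (1:ℝ) ≤ (k:ℝ)+1 := fun k => by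
    have : (0:ℝ) ≤ k := Nat.cast_nonneg k
    linarith
  have hAstep : ∀ k : ℕ, A k < A (k+1) := by
    intro k
    have h := step_upper (hx1 k)
    have hsub := dd_sub (k+1) (Nat.succ_pos k)
    have hcast : ((k+1:ℕ):ℝ) = (k:ℝ)+1 := by push_cast; ring
    rw [hcast] at hsub
    simp only [hA]
    push_cast
    linarith
  have hBstep : ∀ k : ℕ, B (k+1) < B k := by
    intro k
    have h := step_lower (hx1 k)
    have hsub := dd_sub (k+1) (Nat.succ_pos k)
    have hcast : ((k+1:ℕ):ℝ) = (k:ℝ)+1 := by push_cast; ring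
    rw [hcast] at hsub
    simp only [hB]
    push_cast
    linarith
  have hAmono : Monotone A := monotone_nat_of_le_succ (fun k => (hAstep k).le)
  have hBanti : Antitone B := antitone_nat_of_succ_le (fun k => (hBstep k).le)
  have htend0 : Tendsto (fun k : ℕ => 1/(12*((k:ℝ)+1))) atTop (𝓝 0) := by
    have h1 : Tendsto (fun k : ℕ => 12*((k:ℝ)+1)) atTop atTop := by
      apply Tendsto.const_mul_atTop (by norm_num : (0:ℝ) < 12)
      exact tendsto_atTop_add_const_right _ 1 tendsto_natCast_atTop_atTop
    exact tendsto_const_nhds.div_atTop h1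
  have htend0' : Tendsto (fun k : ℕ => 1/(12*((k:ℝ)+1)+1)) atTop (𝓝 0) := by
    have h1 : Tendsto (fun k : ℕ => 12*((k:ℝ)+1)+1) atTop atTop := by
      apply tendsto_atTop_add_const_right
      apply Tendsto.const_mul_atTop (by norm_num : (0:ℝ) < 12)
      exact tendsto_atTop_add_const_right _ 1 tendsto_natCast_atTop_atTop
    exact tendsto_const_nhds.div_atTop h1
  have hAtend : Tendsto A atTop (𝓝 c) := by
    have := dd_tendsto.sub htend0
    rw [sub_zero] at this
    exact this
  have hBtend : Tendsto B atTop (𝓝 c) := by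
    have := dd_tendsto.sub htend0'
    rw [sub_zero] at this
    exact this
  have hAle : ∀ k, A k ≤ c := fun k => hAmono.ge_of_tendsto hAtend k
  have hBge : ∀ k, c ≤ B k := fun k => hBanti.le_of_tendsto hBtend k
  obtain ⟨m, rfl⟩ : ∃ m, n = m + 1 := ⟨n - 1, (Nat.succ_pred_eq_of_pos hn).symm⟩
  constructor
  · have h1 : c < B m := lt_of_le_of_lt (hBge (m+1)) (hBstep m)
    simp only [hB] at h1
    push_cast
    linarith
  · have h2 : A m < c := lt_of_lt_of_le (hAstep m) (hAle (m+1))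
    simp only [hA] at h2
    push_cast
    linarith

/-- Robbins's explicit Stirling bounds:
√(2π)·n^{n+1/2}·e^{−n+1/(12n+1)} < n! < √(2π)·n^{n+1/2}·e^{−n+1/(12n)}. -/
theorem stmt_18 (n : ℕ) (hn : 0 < n) :
    Real.sqrt (2 * Real.pi) * (n : ℝ) ^ ((n : ℝ) + 1 / 2)
        * Real.exp (-(n : ℝ) + 1 / (12 * n + 1))
      < (n.factorial : ℝ) ∧
    (n.factorial : ℝ)
      < Real.sqrt (2 * Real.pi) * (n : ℝ) ^ ((n : ℝ) + 1 / 2)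
          * Real.exp (-(n : ℝ) + 1 / (12 * n)) := by
  obtain ⟨hlow, hhigh⟩ := dd_bounds n hn
  have hπ : (0:ℝ) < Real.pi := Real.pi_pos
  have hpos : (0:ℝ) < n := by exact_mod_cast hn
  have hfac : (0:ℝ) < n.factorial := by exact_mod_cast n.factorial_pos
  have hsq : (0:ℝ) < Real.sqrt (2*Real.pi) := Real.sqrt_pos.mpr (by positivity)
  have hfac_eq : (n.factorial : ℝ) = Real.exp (dd n + ((n:ℝ)+1/2) * Real.log n - n) := by
    have : dd n + ((n:ℝ)+1/2) * Real.log n - n = Real.log (n.factorial) := by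
      simp only [dd]; ring
    rw [this, Real.exp_log hfac]
  have hlhs : ∀ r : ℝ, Real.sqrt (2*Real.pi) * (n:ℝ) ^ ((n:ℝ)+1/2) * Real.exp (-(n:ℝ) + r)
      = Real.exp (Real.log (Real.sqrt (2*Real.pi)) + ((n:ℝ)+1/2) * Real.log n + (-(n:ℝ) + r)) := by
    intro r
    rw [Real.rpow_def_of_pos hpos]
    nth_rewrite 1 [← Real.exp_log hsq]
    rw [← Real.exp_add, ← Real.exp_add]
    congr 1
    ring
  constructor
  · rw [hlhs, hfac_eq]
    apply Real.exp_lt_exp.mpr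
    push_cast
    linarith
  · rw [hlhs, hfac_eq]
    apply Real.exp_lt_exp.mpr
    push_cast
    linarith
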